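/- arXiv:2602.17401 — 2 statements merged into one kernel-verified Lean document; each statement's English description precedes it below -/
import Mathlib

section
/- For every real c ≥ 17, F(c) < 2.88, where F(c) = inf over positive integers t of (t!)^{1/t} · 15^{c/t} / c. -/
open Filter

noncomputable section

/-- An `n × n` 0-1 matrix `A` contains the `k × k` pattern `P` if there are strictly
increasing rows and columns selecting a submatrix that dominates `P`. -/
def Contains {k n : ℕ} (P : Matrix (Fin k) (Fin k) Bool)
    (A : Matrix (Fin n) (Fin n) Bool) : Prop :=
  ∃ r : Fin k → Fin n, ∃ c : Fin k → Fin n,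
    StrictMono r ∧ StrictMono c ∧ ∀ i j, P i j = true → A (r i) (c j) = true

/-- `A` avoids the pattern `P`. -/
def Avoids {k n : ℕ} (P : Matrix (Fin k) (Fin k) Bool)
    (A : Matrix (Fin n) (Fin n) Bool) : Prop := ¬ Contains P A

/-- The permutation matrix of a permutation. -/
def permMatrix {n : ℕ} (σ : Equiv.Perm (Fin n)) : Matrix (Fin n) (Fin n) Bool :=
  fun i j => decide (σ i = j)

/-- `A` is a permutation matrix. -/
def IsPermMatrix {n : ℕ} (A : Matrix (Fin n) (Fin n) Bool) : Prop :=
  ∃ σ : Equiv.Perm (Fin n), A = permMatrix σ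

/-- Number of ones of a 0-1 matrix. -/
def numOnes {m n : ℕ} (A : Matrix (Fin m) (Fin n) Bool) : ℕ :=
  (Finset.univ.filter fun p : Fin m × Fin n => A p.1 p.2 = true).card

/-- `SW P n = S_P(n)`, the number of `n × n` permutation matrices avoiding `P`. -/
def SW {k : ℕ} (P : Matrix (Fin k) (Fin k) Bool) (n : ℕ) : ℕ :=
  Nat.card {A : Matrix (Fin n) (Fin n) Bool // IsPermMatrix A ∧ Avoids P A}

/-- `exFH P n = ex(n, P)`, the maximum number of ones in an `n × n` 0-1 matrix
avoiding `P`. -/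
def exFH {k : ℕ} (P : Matrix (Fin k) (Fin k) Bool) (n : ℕ) : ℕ :=
  sSup {m : ℕ | ∃ A : Matrix (Fin n) (Fin n) Bool, Avoids P A ∧ numOnes A = m}

/-- `F c = inf over positive integers t of (t!)^(1/t) * 15^(c/t) / c`. -/
def F (c : ℝ) : ℝ :=
  ⨅ t : ℕ+, ((t : ℕ).factorial : ℝ) ^ ((1 : ℝ) / (t : ℕ)) * (15 : ℝ) ^ (c / (t : ℕ)) / c

/-- The block (among `n` consecutive blocks of length `t`) containing a given
index of `Fin (t * n)`. -/
def blockOf {t n : ℕ} (ht : 0 < t) (i : Fin (t * n)) : Fin n :=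
  ⟨(i : ℕ) / t, by
    rw [Nat.div_lt_iff_lt_mul ht]
    exact lt_of_lt_of_le i.isLt (le_of_eq (mul_comm t n))⟩

/-- The `t`-contraction of an `(t*n) × (t*n)` 0-1 matrix: entry `(a,b)` is 1 iff
the block `I_a × I_b` contains a one. -/
def contMat {t n : ℕ} (ht : 0 < t) (A : Matrix (Fin (t * n)) (Fin (t * n)) Bool) :
    Matrix (Fin n) (Fin n) Bool :=
  fun a b => by classical exact decide (∃ i j, blockOf ht i = a ∧ blockOf ht j = b ∧ A i j = true)

end

section Aux
open Real

private lemma key_iff_log (t : ℕ) (x : ℝ) (hx : 0 < x) :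
    (Nat.factorial t : ℝ) * (15:ℝ) ^ x < (2.88 * x) ^ t ↔
      Real.log (Nat.factorial t) + x * Real.log 15 < t * Real.log (2.88 * x) := by
  have hf : (0:ℝ) < (Nat.factorial t : ℝ) := by exact_mod_cast t.factorial_pos
  have hL : (0:ℝ) < (Nat.factorial t : ℝ) * (15:ℝ) ^ x := by positivity
  rw [← Real.log_lt_log_iff hL (by positivity), Real.log_mul (ne_of_gt hf) (by positivity),
    Real.log_rpow (by norm_num), Real.log_pow]


private lemma key_interp (t : ℕ) (a b c : ℝ) (ha : 0 < a) (hac : a ≤ c) (hcb : c ≤ b)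
    (hA : (Nat.factorial t : ℝ) * (15:ℝ) ^ a < (2.88*a)^t)
    (hB : (Nat.factorial t : ℝ) * (15:ℝ) ^ b < (2.88*b)^t) :
    (Nat.factorial t : ℝ) * (15:ℝ) ^ c < (2.88*c)^t := by
  rcases eq_or_lt_of_le hcb with rfl | hcb'
  · exact hB
  have hc0 : 0 < c := lt_of_lt_of_le ha hac
  have hb0 : 0 < b := lt_trans hc0 hcb'
  have hab : a < b := lt_of_le_of_lt hac hcb'
  rw [key_iff_log t c hc0]
  rw [key_iff_log t a ha] at hA
  rw [key_iff_log t b hb0] at hB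
  have hba : 0 < b - a := by linarith
  obtain ⟨lam, hlam⟩ : ∃ x, x = (b - c) / (b - a) := ⟨_, rfl⟩
  obtain ⟨mu, hmu⟩ : ∃ x, x = (c - a) / (b - a) := ⟨_, rfl⟩
  have hlp : 0 < lam := by rw [hlam]; apply div_pos <;> linarith
  have hmn : 0 ≤ mu := by rw [hmu]; apply div_nonneg <;> linarith
  have e1 : lam + mu = 1 := by rw [hlam, hmu]; field_simp; ring
  have e2 : lam * a + mu * b = c := by rw [hlam, hmu]; field_simp; ring
  have hconc := (strictConcaveOn_log_Ioi.concaveOn).2 (Set.mem_Ioi.2 (by positivity : (0:ℝ) < 2.88*a))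
    (Set.mem_Ioi.2 (by positivity : (0:ℝ) < 2.88*b)) hlp.le hmn e1
  have hcc : lam • (2.88*a) + mu • (2.88*b) = 2.88 * c := by
    simp only [smul_eq_mul]
    nlinarith [e2]
  rw [hcc] at hconc
  simp only [smul_eq_mul] at hconc
  have p1 := mul_lt_mul_of_pos_left hA hlp
  have p2 := mul_le_mul_of_nonneg_left hB.le hmn
  have p3 := mul_le_mul_of_nonneg_left hconc (by positivity : (0:ℝ) ≤ (t:ℝ))
  have eq3 : lam * (Real.log (Nat.factorial t) + a * Real.log 15)
      + mu * (Real.log (Nat.factorial t) + b * Real.log 15)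
      = (lam + mu) * Real.log (Nat.factorial t) + (lam*a + mu*b) * Real.log 15 := by ring
  rw [e1, e2] at eq3
  nlinarith [p1, p2, p3]

private lemma fact_bound : ∀ n : ℕ, 1 ≤ n →
    (Nat.factorial n : ℝ) * (Real.exp 1)^n ≤ (n:ℝ)^(n+1) * Real.exp 1 := by
  intro n hn
  induction n, hn using Nat.le_induction with
  | base => simp [Nat.factorial]
  | succ n hn ih =>
    have hn0 : (0:ℝ) < n := by exact_mod_cast hn
    have hn1 : (0:ℝ) < (n:ℝ) + 1 := by linarith
    have hE : 0 < Real.exp (1/((n:ℝ)+1)) := Real.exp_pos _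
    have h1 := Real.add_one_le_exp (-(1/((n:ℝ)+1)))
    rw [Real.exp_neg] at h1
    have h3 := mul_le_mul_of_nonneg_right h1 hE.le
    rw [inv_mul_cancel₀ (ne_of_gt hE)] at h3
    have h4 : ((n:ℝ)/((n:ℝ)+1)) * Real.exp (1/((n:ℝ)+1)) ≤ 1 := by
      have : (-(1/((n:ℝ)+1)) + 1) = (n:ℝ)/((n:ℝ)+1) := by field_simp; ring
      rwa [this] at h3
    rw [div_mul_eq_mul_div, div_le_one hn1, mul_comm] at h4
    have hexp : Real.exp (1/((n:ℝ)+1)) * (n:ℝ) ≤ (n:ℝ)+1 := h4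
    have hE1 : Real.exp 1 = Real.exp (1/((n:ℝ)+1)) ^ (n+1) := by
      rw [← Real.exp_nat_mul]
      congr 1
      push_cast
      field_simp
    have hkey : Real.exp 1 * (n:ℝ)^(n+1) ≤ ((n:ℝ)+1)^(n+1) := by
      rw [hE1, ← mul_pow]
      exact pow_le_pow_left₀ (by positivity) hexp _
    have hcast : ((n+1 : ℕ) : ℝ) = (n:ℝ)+1 := by push_cast; ring
    rw [hcast]
    calc ((Nat.factorial (n+1) : ℝ)) * (Real.exp 1)^(n+1)
        = ((n:ℝ)+1) * ((Nat.factorial n : ℝ) * (Real.exp 1)^n) * Real.exp 1 := by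
          rw [Nat.factorial_succ]; push_cast [pow_succ]; ring
      _ ≤ ((n:ℝ)+1) * ((n:ℝ)^(n+1) * Real.exp 1) * Real.exp 1 := by
          exact mul_le_mul_of_nonneg_right
            (mul_le_mul_of_nonneg_left ih (by positivity)) (Real.exp_pos 1).le
      _ = ((n:ℝ)+1) * Real.exp 1 * (Real.exp 1 * (n:ℝ)^(n+1)) := by ring
      _ ≤ ((n:ℝ)+1) * Real.exp 1 * (((n:ℝ)+1)^(n+1)) := by
          exact mul_le_mul_of_nonneg_left hkey (by positivity)
      _ = ((n:ℝ)+1)^(n+1+1) * Real.exp 1 := by ring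

private lemma sigma_pow : ∀ t : ℕ, 163 ≤ t → (t:ℝ) * 2.7182819 ≤ 1.0567^t := by
  intro t ht
  induction t, ht using Nat.le_induction with
  | base => norm_num
  | succ t ht ih =>
    have htR : (163:ℝ) ≤ t := by exact_mod_cast ht
    have : ((t:ℝ)+1) * 2.7182819 ≤ 1.0567 * ((t:ℝ) * 2.7182819) := by nlinarith
    calc ((t+1 : ℕ):ℝ) * 2.7182819 = ((t:ℝ)+1) * 2.7182819 := by push_cast; ring
      _ ≤ 1.0567 * ((t:ℝ) * 2.7182819) := this
      _ ≤ 1.0567 * 1.0567^t := by nlinarith [ih]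
      _ = 1.0567^(t+1) := by rw [pow_succ]; ring

private lemma pow15_le (c : ℝ) (t : ℕ) (hc : 0 < c) (ht : (271/100) * c ≤ (t:ℝ)) :
    (15:ℝ) ^ c ≤ (2.717:ℝ)^t := by
  have hq : (0:ℝ) < 2.717 := by norm_num
  have hlq : 0 ≤ Real.log 2.717 := Real.log_nonneg (by norm_num)
  have hnat : (15:ℝ)^(100:ℕ) ≤ (2.717:ℝ)^(271:ℕ) := by
    rw [show (2.717:ℝ) = 2717/1000 by norm_num, div_pow, le_div_iff₀ (by positivity)]
    exact_mod_cast (Nat.le_of_ble_eq_true rfl : (15:ℕ)^100 * 1000^271 ≤ 2717^271)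
  have hlog : Real.log ((15:ℝ)^(100:ℕ)) ≤ Real.log ((2.717:ℝ)^(271:ℕ)) :=
    Real.log_le_log (by positivity) hnat
  rw [Real.log_pow, Real.log_pow] at hlog
  push_cast at hlog
  have h15 : Real.log 15 ≤ (271/100) * Real.log 2.717 := by linarith
  have h2 : c * Real.log 15 ≤ (t:ℝ) * Real.log 2.717 := by
    calc c * Real.log 15 ≤ c * ((271/100) * Real.log 2.717) :=
          mul_le_mul_of_nonneg_left h15 hc.le
      _ = ((271/100) * c) * Real.log 2.717 := by ring
      _ ≤ (t:ℝ) * Real.log 2.717 := mul_le_mul_of_nonneg_right ht hlq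
  calc (15:ℝ) ^ c = Real.exp (Real.log 15 * c) := Real.rpow_def_of_pos (by norm_num) c
    _ ≤ Real.exp ((t:ℝ) * Real.log 2.717) := by
        rw [Real.exp_le_exp]; linarith [h2]
    _ = (2.717:ℝ)^t := by
        rw [Real.exp_nat_mul, Real.exp_log hq]

private lemma key_tail (c : ℝ) (hc : 60 ≤ c) :
    ∃ t : ℕ, 1 ≤ t ∧ (Nat.factorial t : ℝ) * (15:ℝ) ^ c < (2.88*c)^t := by
  have hc0 : (0:ℝ) < c := by linarith
  set t : ℕ := ⌈(271/100) * c⌉₊ with htdef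
  have ht1 : (271/100) * c ≤ (t:ℝ) := Nat.le_ceil _
  have ht2 : (t:ℝ) < (271/100) * c + 1 := Nat.ceil_lt_add_one (by positivity)
  have ht163 : 163 ≤ t := by
    have : (162:ℝ) < (t:ℝ) := by nlinarith
    have h162 : 162 < t := by exact_mod_cast this
    omega
  refine ⟨t, by omega, ?_⟩
  have htR : (163:ℝ) ≤ (t:ℝ) := by exact_mod_cast ht163
  have htpos : (0:ℝ) < (t:ℝ) := by linarith
  have hepos := Real.exp_pos 1
  have hE2 : Real.exp 1 < 2.7182819 := lt_trans Real.exp_one_lt_d9 (by norm_num)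
  have hE1 : (2.7182818:ℝ) ≤ Real.exp 1 :=
    le_of_lt (lt_of_lt_of_le (by norm_num) Real.exp_one_gt_d9.le)
  have fb : (Nat.factorial t : ℝ) ≤ (t:ℝ)^(t+1) * Real.exp 1 / (Real.exp 1)^t := by
    rw [le_div_iff₀ (by positivity)]
    exact fact_bound t (by omega)
  have h15 : (15:ℝ)^c ≤ (2.717:ℝ)^t := pow15_le c t hc0 ht1
  have step1 : (Nat.factorial t : ℝ) * (15:ℝ)^c
      ≤ ((t:ℝ)^(t+1) * Real.exp 1 / (Real.exp 1)^t) * (2.717:ℝ)^t :=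
    mul_le_mul fb h15 (Real.rpow_nonneg (by norm_num) c) (by positivity)
  refine lt_of_le_of_lt step1 ?_
  rw [div_mul_eq_mul_div, div_lt_iff₀ (by positivity)]
  have hc' : (288/271)*((t:ℝ)-1) ≤ 2.88*c := by linarith
  have h5 : 2.7182818 * ((t:ℝ)-1) ≤ Real.exp 1 * ((t:ℝ)-1) :=
    mul_le_mul_of_nonneg_right hE1 (by linarith)
  have hbb : 1.0567 * ((t:ℝ) * 2.717) ≤ (288/271)*((t:ℝ)-1) * Real.exp 1 := by
    nlinarith [h5, htR]
  have hte : (t:ℝ) * Real.exp 1 < 1.0567^t :=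
    lt_of_lt_of_le (by nlinarith [hE2, htpos]) (sigma_pow t ht163)
  calc (t:ℝ)^(t+1) * Real.exp 1 * (2.717:ℝ)^t
      = ((t:ℝ)*2.717)^t * ((t:ℝ) * Real.exp 1) := by rw [pow_succ, mul_pow]; ring
    _ < ((t:ℝ)*2.717)^t * 1.0567^t :=
        mul_lt_mul_of_pos_left hte (pow_pos (by nlinarith) t)
    _ = (1.0567 * ((t:ℝ)*2.717))^t := by rw [mul_pow, mul_pow]; ring
    _ ≤ ((288/271)*((t:ℝ)-1) * Real.exp 1)^t := pow_le_pow_left₀ (by positivity) hbb t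
    _ ≤ (2.88*c*Real.exp 1)^t :=
        pow_le_pow_left₀ (mul_nonneg (by linarith) hepos.le)
          (mul_le_mul_of_nonneg_right hc' hepos.le) t
    _ = (2.88*c)^t * (Real.exp 1)^t := mul_pow _ _ _

private lemma key_of_pow (t p q : ℕ) (hq : 0 < q) (hp : 0 < p)
    (h : (Nat.factorial t)^q * 15^p * (100*q)^(t*q) < (288*p)^(t*q)) :
    (Nat.factorial t : ℝ) * (15:ℝ) ^ ((p:ℝ)/(q:ℝ)) < (2.88 * ((p:ℝ)/(q:ℝ))) ^ t := by
  have hqR : (0:ℝ) < q := by exact_mod_cast hq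
  have hpR : (0:ℝ) < p := by exact_mod_cast hp
  have hB : (0:ℝ) < 2.88 * ((p:ℝ)/(q:ℝ)) := by positivity
  refine lt_of_pow_lt_pow_left₀ q (by positivity) ?_
  have h1 : ((15:ℝ) ^ ((p:ℝ)/(q:ℝ)))^q = (15:ℝ)^p := by
    rw [← Real.rpow_natCast ((15:ℝ) ^ ((p:ℝ)/(q:ℝ))) q, ← Real.rpow_mul (by norm_num),
      div_mul_cancel₀ _ (ne_of_gt hqR), Real.rpow_natCast]
  rw [mul_pow, h1, ← pow_mul]
  have h2 : 2.88 * ((p:ℝ)/(q:ℝ)) = (288*p) / (100*q) := by field_simp; ring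
  rw [h2, div_pow, lt_div_iff₀ (by positivity)]
  calc ((Nat.factorial t : ℝ))^q * 15^p * (100*q)^(t*q)
      = (((Nat.factorial t)^q * 15^p * (100*q)^(t*q) : ℕ) : ℝ) := by push_cast; ring
    _ < (((288*p)^(t*q) : ℕ) : ℝ) := by exact_mod_cast h
    _ = ((288*p:ℝ))^(t*q) := by push_cast; ring

private lemma term_lt (t : ℕ) (ht : 1 ≤ t) (c : ℝ) (hc0 : 0 < c)
    (h : (Nat.factorial t : ℝ) * (15:ℝ) ^ c < (2.88*c)^t) :
    (Nat.factorial t : ℝ) ^ ((1:ℝ)/(t:ℕ)) * (15:ℝ) ^ (c/(t:ℕ)) / c < 2.88 := by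
  rw [div_lt_iff₀ hc0]
  have ht0 : (0:ℝ) < (t:ℝ) := by exact_mod_cast ht
  have hfac : (0:ℝ) ≤ (Nat.factorial t : ℝ) := by positivity
  have h1 : ((Nat.factorial t : ℝ) * (15:ℝ)^c) ^ ((1:ℝ)/(t:ℝ))
      < ((2.88*c)^t) ^ ((1:ℝ)/(t:ℝ)) :=
    Real.rpow_lt_rpow (by positivity) h (by positivity)
  have e1 : ((Nat.factorial t : ℝ) * (15:ℝ)^c) ^ ((1:ℝ)/(t:ℝ))
      = (Nat.factorial t : ℝ) ^ ((1:ℝ)/(t:ℝ)) * (15:ℝ)^(c/(t:ℝ)) := by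
    rw [Real.mul_rpow hfac (by positivity), ← Real.rpow_mul (by norm_num : (0:ℝ) ≤ 15),
      mul_one_div]
  have e2 : (((2.88*c)^t : ℝ)) ^ ((1:ℝ)/(t:ℝ)) = 2.88 * c := by
    rw [← Real.rpow_natCast (2.88*c) t, ← Real.rpow_mul (by positivity), mul_one_div,
      div_self (ne_of_gt ht0), Real.rpow_one]
  rw [e1, e2] at h1
  exact h1

-- endpoint checks
private lemma k50a : (Nat.factorial 50 : ℝ) * (15:ℝ)^(17:ℝ) < (2.88*(17:ℝ))^50 := by
  have h := key_of_pow 50 17 1 (by norm_num) (by norm_num) (by norm_num [Nat.factorial])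
  have e : ((17:ℕ):ℝ)/((1:ℕ):ℝ) = (17:ℝ) := by norm_num
  rwa [e] at h

private lemma k50b : (Nat.factorial 50 : ℝ) * (15:ℝ)^(20:ℝ) < (2.88*(20:ℝ))^50 := by
  have h := key_of_pow 50 20 1 (by norm_num) (by norm_num) (by norm_num [Nat.factorial])
  have e : ((20:ℕ):ℝ)/((1:ℕ):ℝ) = (20:ℝ) := by norm_num
  rwa [e] at h

private lemma k64a : (Nat.factorial 64 : ℝ) * (15:ℝ)^(20:ℝ) < (2.88*(20:ℝ))^64 := by
  have h := key_of_pow 64 20 1 (by norm_num) (by norm_num) (by norm_num [Nat.factorial])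
  have e : ((20:ℕ):ℝ)/((1:ℕ):ℝ) = (20:ℝ) := by norm_num
  rwa [e] at h

private lemma k64b : (Nat.factorial 64 : ℝ) * (15:ℝ)^((55:ℝ)/2) < (2.88*((55:ℝ)/2))^64 := by
  have h := key_of_pow 64 55 2 (by norm_num) (by norm_num) (by norm_num [Nat.factorial])
  have e : ((55:ℕ):ℝ)/((2:ℕ):ℝ) = (55:ℝ)/2 := by norm_num
  rwa [e] at h

private lemma k95a : (Nat.factorial 95 : ℝ) * (15:ℝ)^((55:ℝ)/2) < (2.88*((55:ℝ)/2))^95 := by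
  have h := key_of_pow 95 55 2 (by norm_num) (by norm_num) (by norm_num [Nat.factorial])
  have e : ((55:ℕ):ℝ)/((2:ℕ):ℝ) = (55:ℝ)/2 := by norm_num
  rwa [e] at h

private lemma k95b : (Nat.factorial 95 : ℝ) * (15:ℝ)^(44:ℝ) < (2.88*(44:ℝ))^95 := by
  have h := key_of_pow 95 44 1 (by norm_num) (by norm_num) (by norm_num [Nat.factorial])
  have e : ((44:ℕ):ℝ)/((1:ℕ):ℝ) = (44:ℝ) := by norm_num
  rwa [e] at h

private lemma k127a : (Nat.factorial 127 : ℝ) * (15:ℝ)^(44:ℝ) < (2.88*(44:ℝ))^127 := by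
  have h := key_of_pow 127 44 1 (by norm_num) (by norm_num) (by norm_num [Nat.factorial])
  have e : ((44:ℕ):ℝ)/((1:ℕ):ℝ) = (44:ℝ) := by norm_num
  rwa [e] at h

private lemma k127b : (Nat.factorial 127 : ℝ) * (15:ℝ)^(60:ℝ) < (2.88*(60:ℝ))^127 := by
  have h := key_of_pow 127 60 1 (by norm_num) (by norm_num) (by norm_num [Nat.factorial])
  have e : ((60:ℕ):ℝ)/((1:ℕ):ℝ) = (60:ℝ) := by norm_num
  rwa [e] at h

end Aux

theorem F_lt_288_of_ge_17 (c : ℝ) (hc : 17 ≤ c) : F c < 2.88 := by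
  have hc0 : (0:ℝ) < c := by linarith
  obtain ⟨t, ht1, hkey⟩ : ∃ t : ℕ, 1 ≤ t ∧
      (Nat.factorial t : ℝ) * (15:ℝ) ^ c < (2.88*c)^t := by
    rcases le_total c 20 with h | h
    · exact ⟨50, by norm_num, key_interp 50 17 20 c (by norm_num) hc h k50a k50b⟩
    rcases le_total c (55/2) with h' | h'
    · exact ⟨64, by norm_num, key_interp 64 20 (55/2) c (by norm_num) h h' k64a k64b⟩
    rcases le_total c 44 with h'' | h''
    · exact ⟨95, by norm_num, key_interp 95 (55/2) 44 c (by norm_num) h' h'' k95a k95b⟩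
    rcases le_total c 60 with h3 | h3
    · exact ⟨127, by norm_num, key_interp 127 44 60 c (by norm_num) h'' h3 k127a k127b⟩
    · exact key_tail c h3
  have hbdd : BddBelow (Set.range fun s : ℕ+ =>
      (((s:ℕ).factorial : ℝ)) ^ ((1:ℝ)/((s:ℕ):ℝ)) * (15:ℝ) ^ (c/((s:ℕ):ℝ)) / c) := by
    refine ⟨0, ?_⟩
    rintro x ⟨s, rfl⟩
    exact div_nonneg (by positivity) hc0.le
  have hle : F c ≤ ((Nat.factorial t : ℝ)) ^ ((1:ℝ)/(t:ℝ)) * (15:ℝ) ^ (c/(t:ℝ)) / c := by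
    unfold F
    exact ciInf_le hbdd (⟨t, ht1⟩ : ℕ+)
  exact lt_of_le_of_lt hle (term_lt t ht1 c hc0 hkey)
end

section
/- The function G(c) = (3/e) · 15^{1/3} · (6πc)^{1/(6c)} · e^{1/(108c²)} is strictly decreasing on the interval [1, ∞). -/
open Filter

/-- `G c = (3/e) * 15^(1/3) * (6 pi c)^(1/(6c)) * e^(1/(108 c^2))`. -/
noncomputable def G (c : ℝ) : ℝ :=
  3 / Real.exp 1 * (15 : ℝ) ^ ((1 : ℝ) / 3) * (6 * Real.pi * c) ^ (1 / (6 * c)) *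
    Real.exp (1 / (108 * c ^ 2))

noncomputable def f (c : ℝ) : ℝ := Real.log (6 * Real.pi * c) / (6 * c)

lemma f_hasDerivAt {c : ℝ} (hc : 0 < c) :
    HasDerivAt f ((6 - 6 * Real.log (6 * Real.pi * c)) / (6 * c) ^ 2) c := by
  have hpi := Real.pi_pos
  have h1 : HasDerivAt (fun x : ℝ => 6 * Real.pi * x) (6 * Real.pi) c := by
    simpa using (hasDerivAt_id c).const_mul (6 * Real.pi)
  have h2 : HasDerivAt (fun x : ℝ => Real.log (6 * Real.pi * x))
      ((6 * Real.pi) / (6 * Real.pi * c)) c := h1.log (by positivity)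
  have h3 : HasDerivAt (fun x : ℝ => 6 * x) 6 c := by
    simpa using (hasDerivAt_id c).const_mul (6 : ℝ)
  have h4 := h2.div h3 (by positivity)
  refine h4.congr_deriv ?_
  field_simp

lemma f_strictAntiOn : StrictAntiOn f (Set.Ici (1 : ℝ)) := by
  apply strictAntiOn_of_deriv_neg (convex_Ici 1)
  · intro x hx
    have hx0 : (0 : ℝ) < x := lt_of_lt_of_le one_pos hx
    exact (f_hasDerivAt hx0).continuousAt.continuousWithinAt
  · intro x hx
    rw [interior_Ici] at hx
    have hx0 : (0 : ℝ) < x := lt_trans one_pos hx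
    rw [(f_hasDerivAt hx0).deriv]
    apply div_neg_of_neg_of_pos
    · have hlog : 1 < Real.log (6 * Real.pi * x) := by
        rw [Real.lt_log_iff_exp_lt (by positivity)]
        have h9 := Real.exp_one_lt_d9
        have hp := Real.pi_gt_three
        have hx1 : (1:ℝ) < x := hx
        nlinarith [mul_pos (sub_pos.mpr hp) (sub_pos.mpr hx1)]
      linarith
    · positivity

lemma rpow_eq_exp_f {c : ℝ} (hc : 0 < c) :
    (6 * Real.pi * c) ^ (1 / (6 * c)) = Real.exp (f c) := by
  rw [Real.rpow_def_of_pos (by positivity)]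
  unfold f
  congr 1
  ring

theorem G_strictAntiOn : StrictAntiOn G (Set.Ici (1 : ℝ)) := by
  intro x hx y hy hxy
  have hx0 : (0 : ℝ) < x := lt_of_lt_of_le one_pos hx
  have hy0 : (0 : ℝ) < y := lt_of_lt_of_le one_pos hy
  have hf : f y < f x := f_strictAntiOn hx hy hxy
  have hE : Real.exp (1 / (108 * y ^ 2)) < Real.exp (1 / (108 * x ^ 2)) := by
    apply Real.exp_lt_exp.mpr
    apply one_div_lt_one_div_of_lt (by positivity)
    nlinarith
  have hA : (0 : ℝ) < 3 / Real.exp 1 * (15 : ℝ) ^ ((1 : ℝ) / 3) := by positivity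
  unfold G
  rw [rpow_eq_exp_f hx0, rpow_eq_exp_f hy0]
  have h1 : 3 / Real.exp 1 * (15 : ℝ) ^ ((1 : ℝ) / 3) * Real.exp (f y) <
      3 / Real.exp 1 * (15 : ℝ) ^ ((1 : ℝ) / 3) * Real.exp (f x) :=
    mul_lt_mul_of_pos_left (Real.exp_lt_exp.mpr hf) hA
  exact mul_lt_mul'' h1 hE (by positivity) (by positivity)
end
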